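/- Let f(x) = ∑_S C_S(x[S]) be a VCSP fitness on x : Π_i D_i and let k be a variable. Define f_{-k}(y) = ∑_{S ∌ k} C_S(y[S]) + max_{a ∈ D_k} ∑_{S ∋ k} C_S(a, y[S\{k}]) on assignments y over indices other than k. If x and x' are adjacent with step-index i ∉ NS(k) (i not in any scope containing k, and i ≠ k), then f(x') - f(x) = f_{-k}(x'[-k]) - f_{-k}(x[-k]), where x[-k] denotes x restricted to indices other than k. -/

import Mathlib

/-- Smoothing out variable `k` of a VCSP: if `x` and `x'` are adjacent with
step-index `i ∉ NS(k)` (so `i ≠ k` and `i` lies in no scope containing `k`),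
then the fitness difference of `f` equals that of the smoothed fitness
`f₋ₖ`, which replaces all constraints containing `k` by their maximum over
the value of variable `k`. -/
theorem smoothing_step_outside_NS {n : ℕ} (D : Fin n → Type) (k : Fin n)
    [Fintype (D k)] [Nonempty (D k)]
    {ι : Type} [Fintype ι]
    (scope : ι → Finset (Fin n)) (C : ι → (∀ i, D i) → ℤ)
    (hdep : ∀ c, ∀ x y : ∀ i, D i, (∀ i ∈ scope c, x i = y i) → C c x = C c y)
    (f fmk : (∀ i, D i) → ℤ)
    (hf : ∀ x, f x = ∑ c, C c x)
    (hfmk : ∀ x, fmk x =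
      (∑ c ∈ Finset.univ.filter (fun c => k ∉ scope c), C c x)
      + Finset.univ.sup' Finset.univ_nonempty (fun a : D k =>
          ∑ c ∈ Finset.univ.filter (fun c => k ∈ scope c),
            C c (Function.update x k a)))
    (x x' : ∀ i, D i) (i : Fin n) (hik : i ≠ k)
    (hiNS : ∀ c, k ∈ scope c → i ∉ scope c)
    (hadj : ∀ j, j ≠ i → x' j = x j) :
    f x' - f x = fmk x' - fmk x := by
  have hsame : ∀ c, k ∈ scope c → C c x' = C c x := by
    intro c hc
    apply hdep
    intro j hj
    exact hadj j (fun h => hiNS c hc (h ▸ hj))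
  have hfixed : ∀ (a : D k) c, k ∈ scope c →
      C c (Function.update x' k a) = C c (Function.update x k a) := by
    intro a c hc
    apply hdep
    intro j hj
    by_cases hjk : j = k
    · subst hjk; simp
    · rw [Function.update_of_ne hjk, Function.update_of_ne hjk]
      exact hadj j (fun h => hiNS c hc (h ▸ hj))
  have hsup : Finset.univ.sup' Finset.univ_nonempty (fun a : D k =>
        ∑ c ∈ Finset.univ.filter (fun c => k ∈ scope c),
          C c (Function.update x' k a))
      = Finset.univ.sup' Finset.univ_nonempty (fun a : D k =>
        ∑ c ∈ Finset.univ.filter (fun c => k ∈ scope c),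
          C c (Function.update x k a)) := by
    apply Finset.sup'_congr _ rfl
    intro a _
    exact Finset.sum_congr rfl fun c hc => hfixed a c (Finset.mem_filter.mp hc).2
  have hsplit : ∀ y : ∀ i, D i,
      ∑ c, C c y = (∑ c ∈ Finset.univ.filter (fun c => k ∉ scope c), C c y)
        + ∑ c ∈ Finset.univ.filter (fun c => k ∈ scope c), C c y := by
    intro y
    rw [← Finset.sum_filter_add_sum_filter_not Finset.univ (fun c => k ∉ scope c)]
    simp
  have hin : (∑ c ∈ Finset.univ.filter (fun c => k ∈ scope c), C c x')
      = ∑ c ∈ Finset.univ.filter (fun c => k ∈ scope c), C c x :=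
    Finset.sum_congr rfl fun c hc => hsame c (Finset.mem_filter.mp hc).2
  rw [hf, hf, hfmk, hfmk, hsup, hsplit, hsplit, hin]
  ring
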